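/- Let f : [0,∞) → [0,∞) be C¹ and nondecreasing. The induced map on monotone bead distributions, sending (a₁, a₁+a₂, …, a₁+⋯+aₙ) to (f(a₁), f(a₁)+f(a₂), …, f(a₁)+⋯+f(aₙ)) for 0 ≤ a₁ ≤ ⋯ ≤ aₙ, preserves the componentwise partial order ≤ (on partial sums) if and only if f is concave (f′ nonincreasing). -/

import Mathlib

open Set Finset Filter Topology

private lemma chain_mono' {n : ℕ} {b : ℕ → ℝ} (hb : ∀ i, i + 1 < n → b i ≤ b (i + 1)) :
    ∀ i j, i ≤ j → j < n → b i ≤ b j := by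
  intro i j hij hjn
  induction j with
  | zero =>
    obtain rfl : i = 0 := Nat.le_zero.mp hij
    exact le_rfl
  | succ m ih =>
    rcases Nat.eq_or_lt_of_le hij with rfl | h
    · exact le_rfl
    · exact le_trans (ih (Nat.lt_succ_iff.mp h) (Nat.lt_of_succ_lt hjn)) (hb m hjn)

private lemma abel_nonneg' : ∀ (k : ℕ) (g d : ℕ → ℝ),
    (∀ i, i < k → 0 ≤ g i) →
    (∀ i j, i ≤ j → j < k → g j ≤ g i) →
    (∀ j, j ≤ k → 0 ≤ ∑ i ∈ Finset.range j, d i) →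
    0 ≤ ∑ i ∈ Finset.range k, g i * d i := by
  intro k
  induction k with
  | zero => intro g d _ _ _; simp
  | succ k ih =>
    intro g d hg0 hganti hD
    have h1 : ∑ i ∈ Finset.range (k+1), g i * d i
        = (∑ i ∈ Finset.range k, (g i - g k) * d i)
          + g k * ∑ i ∈ Finset.range (k+1), d i := by
      have hcong : ∀ i ∈ Finset.range (k+1), g i * d i = (g i - g k) * d i + g k * d i := by
        intro i _; ring
      rw [Finset.sum_congr rfl hcong, Finset.sum_add_distrib, ← Finset.mul_sum,
        Finset.sum_range_succ (fun i => (g i - g k) * d i)]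
      ring
    have hIH : 0 ≤ ∑ i ∈ Finset.range k, (g i - g k) * d i :=
      ih _ d (fun i hi => sub_nonneg.mpr (hganti i k hi.le (Nat.lt_succ_self k)))
        (fun i j hij hjk => sub_le_sub_right (hganti i j hij (hjk.trans (Nat.lt_succ_self k))) _)
        (fun j hj => hD j (hj.trans (Nat.le_succ k)))
    have hlast : 0 ≤ g k * ∑ i ∈ Finset.range (k+1), d i :=
      mul_nonneg (hg0 k (Nat.lt_succ_self k)) (hD (k+1) le_rfl)
    rw [h1]; linarith

private lemma tangent_le' {f : ℝ → ℝ} (hconc : ConcaveOn ℝ (Set.Ici 0) f)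
    (hfd : DifferentiableOn ℝ f (Set.Ici 0)) {x y : ℝ} (hx : (0:ℝ) ≤ x) (hy : (0:ℝ) ≤ y) :
    f x ≤ f y + derivWithin f (Set.Ici 0) y * (x - y) := by
  rcases lt_trichotomy x y with h | rfl | h
  · have h2 := hconc.derivWithin_le_slope hx hy h (hfd y hy)
    rw [slope_def_field] at h2
    have hpos : (0:ℝ) < y - x := by linarith
    have := (le_div_iff₀ hpos).mp h2
    nlinarith
  · simp
  · have h2 := hconc.slope_le_derivWithin hy hx h (hfd y hy)
    rw [slope_def_field] at h2
    have hpos : (0:ℝ) < x - y := by linarith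
    have := (div_le_iff₀ hpos).mp h2
    nlinarith

/-- for a `C¹` nondecreasing `f : [0,∞) → [0,∞)`, the induced map
on monotone bead distributions (partial sums of gaps) preserves the
componentwise order of partial sums iff `f` is concave. -/
theorem induced_map_monotone_iff_concave (f : ℝ → ℝ)
    (hf : ContDiffOn ℝ 1 f (Set.Ici (0 : ℝ)))
    (hmono : MonotoneOn f (Set.Ici (0 : ℝ)))
    (hpos : ∀ x : ℝ, 0 ≤ x → 0 ≤ f x) :
    (∀ (n : ℕ) (a b : ℕ → ℝ),
      (∀ i, i < n → 0 ≤ a i) → (∀ i, i < n → 0 ≤ b i) →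
      (∀ i, i + 1 < n → a i ≤ a (i + 1)) → (∀ i, i + 1 < n → b i ≤ b (i + 1)) →
      (∀ k, k ≤ n → ∑ i ∈ Finset.range k, a i ≤ ∑ i ∈ Finset.range k, b i) →
      ∀ k, k ≤ n → ∑ i ∈ Finset.range k, f (a i) ≤ ∑ i ∈ Finset.range k, f (b i)) ↔
    ConcaveOn ℝ (Set.Ici (0 : ℝ)) f := by
  have hfd : DifferentiableOn ℝ f (Set.Ici 0) := hf.differentiableOn one_ne_zero
  constructor
  · -- forward: the property implies concavity
    intro H
    -- the Wright-type inequality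
    have star : ∀ x y h : ℝ, 0 ≤ x → 0 < h → x + h ≤ y →
        f (y + h) - f y ≤ f (x + h) - f x := by
      intro x y h hx hh hxy
      have hy0 : (0:ℝ) ≤ y := by linarith
      have key := H 2 (fun i => if i = 0 then x else y + h)
        (fun i => if i = 0 then x + h else y)
        (by intro i hi; interval_cases i <;> simp <;> linarith)
        (by intro i hi; interval_cases i <;> simp <;> linarith)
        (by intro i hi; obtain rfl : i = 0 := by omega
            simp; linarith)
        (by intro i hi; obtain rfl : i = 0 := by omega
            simp; linarith)
        (by
          intro k hk; interval_cases k <;>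
            simp [Finset.sum_range_succ] <;> linarith)
        2 le_rfl
      simp [Finset.sum_range_succ] at key
      linarith
    -- derivative comparison on the interior
    have hanti : AntitoneOn (deriv f) (interior (Set.Ici (0:ℝ))) := by
      rw [interior_Ici]
      intro x hx y hy hxy
      rcases eq_or_lt_of_le hxy with rfl | hlt
      · exact le_rfl
      have hdx : DifferentiableAt ℝ f x :=
        (hfd x (le_of_lt (Set.mem_Ioi.mp hx))).differentiableAt (Ici_mem_nhds hx)
      have hdy : DifferentiableAt ℝ f y :=
        (hfd y (le_of_lt (hx.trans hlt))).differentiableAt (Ici_mem_nhds (hx.trans hlt))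
      have hmap : ∀ z : ℝ, Tendsto (fun h : ℝ => z + h) (𝓝[>] (0:ℝ)) (𝓝[≠] z) := by
        intro z
        rw [tendsto_nhdsWithin_iff]
        constructor
        · have : Tendsto (fun h : ℝ => z + h) (𝓝 (0:ℝ)) (𝓝 (z + 0)) :=
            (continuous_const.add continuous_id).tendsto 0
          simpa using this.mono_left nhdsWithin_le_nhds
        · filter_upwards [self_mem_nhdsWithin] with h hh
          simp only [Set.mem_compl_iff, Set.mem_singleton_iff]
          intro hc
          have : h = 0 := by linarith
          exact absurd this (ne_of_gt hh)
      have tx : Tendsto (fun h : ℝ => slope f x (x + h)) (𝓝[>] (0:ℝ)) (𝓝 (deriv f x)) :=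
        (hasDerivAt_iff_tendsto_slope.mp hdx.hasDerivAt).comp (hmap x)
      have ty : Tendsto (fun h : ℝ => slope f y (y + h)) (𝓝[>] (0:ℝ)) (𝓝 (deriv f y)) :=
        (hasDerivAt_iff_tendsto_slope.mp hdy.hasDerivAt).comp (hmap y)
      refine le_of_tendsto_of_tendsto ty tx ?_
      filter_upwards [Ioo_mem_nhdsGT_of_mem (Set.mem_Ico.mpr ⟨le_rfl, sub_pos.mpr hlt⟩)]
        with h hh
      obtain ⟨hh0, hhy⟩ := hh
      have hxy' : x + h ≤ y := by linarith
      have hst := star x y h (le_of_lt hx) hh0 hxy'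
      rw [slope_def_field, slope_def_field]
      have e1 : x + h - x = h := by ring
      have e2 : y + h - y = h := by ring
      rw [e1, e2]
      gcongr
    exact AntitoneOn.concaveOn_of_deriv (convex_Ici 0) hf.continuousOn
      (by
        rw [interior_Ici]
        intro x hx
        exact ((hfd x (le_of_lt (Set.mem_Ioi.mp hx))).differentiableAt (Ici_mem_nhds hx)).differentiableWithinAt)
      hanti
  · -- backward: concavity implies the property
    intro hconc n a b ha0 hb0 hamono hbmono hsum k hk
    set g : ℝ → ℝ := derivWithin f (Set.Ici 0) with hg
    have hganti : AntitoneOn g (Set.Ici 0) := hconc.antitoneOn_derivWithin hfd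
    have hgnonneg : ∀ y : ℝ, 0 ≤ y → 0 ≤ g y := by
      intro y hy
      have h1 := hconc.slope_le_derivWithin hy (by linarith : (0:ℝ) ≤ y + 1)
        (by linarith) (hfd y hy)
      rw [slope_def_field] at h1
      have h2 : f y ≤ f (y + 1) := hmono hy (by simp; linarith) (by linarith)
      have e : y + 1 - y = 1 := by ring
      rw [e, div_one] at h1
      linarith
    have key : 0 ≤ ∑ i ∈ Finset.range k, g (b i) * (b i - a i) := by
      apply abel_nonneg' k (fun i => g (b i)) (fun i => b i - a i)
      · intro i hi; exact hgnonneg _ (hb0 i (lt_of_lt_of_le hi hk))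
      · intro i j hij hjk
        have hjn : j < n := lt_of_lt_of_le hjk hk
        exact hganti (hb0 i (lt_of_le_of_lt hij hjn)) (hb0 j hjn)
          (chain_mono' hbmono i j hij hjn)
      · intro j hj
        have := hsum j (hj.trans hk)
        rw [Finset.sum_sub_distrib]
        linarith
    have tangent : ∀ i ∈ Finset.range k, f (a i) ≤ f (b i) - g (b i) * (b i - a i) := by
      intro i hi
      have hin : i < n := lt_of_lt_of_le (Finset.mem_range.mp hi) hk
      have := tangent_le' hconc hfd (ha0 i hin) (hb0 i hin)
      have e : g (b i) * (a i - b i) = -(g (b i) * (b i - a i)) := by ring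
      linarith [this, e ▸ this]
    calc ∑ i ∈ Finset.range k, f (a i)
        ≤ ∑ i ∈ Finset.range k, (f (b i) - g (b i) * (b i - a i)) :=
          Finset.sum_le_sum tangent
      _ = ∑ i ∈ Finset.range k, f (b i) - ∑ i ∈ Finset.range k, g (b i) * (b i - a i) :=
          Finset.sum_sub_distrib _ _
      _ ≤ ∑ i ∈ Finset.range k, f (b i) := by linarith
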